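/- For every k ∈ ℕ there exist a set X, a hypothesis class H ⊆ {-1,1}^X with VC dimension 1, and a collection of transformations T of X such that the VC dimension of H ∘ T is at least k. -/

import Mathlib

/-- A class `F` of Bool-valued functions shatters a finite set `S` if every
labeling of `S` is realized by some member of `F`. -/
def Shatters {X : Type*} (F : Set (X → Bool)) (S : Finset X) : Prop :=
  ∀ g : X → Bool, ∃ f ∈ F, ∀ x ∈ S, f x = g x

/-- The VC dimension of a class of Bool-valued functions, as an extended natural. -/
noncomputable def vcDim {X : Type*} (F : Set (X → Bool)) : ℕ∞ :=
  ⨆ (S : Finset X) (_ : Shatters F S), (S.card : ℕ∞)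

/-- The base type: `k+1` base points plus copies `T_τ(x_i)` indexed by labelings. -/
abbrev BlowupX (n : ℕ) : Type := Fin n ⊕ ((Fin n → Bool) × Fin n)

/-- The hypothesis `h_σ`: true everywhere except on its own block. -/
def hfun (n : ℕ) (σ : Fin n → Bool) : BlowupX n → Bool :=
  Sum.elim (fun _ => true) (fun p => if p.1 = σ then σ p.2 else true)

/-- The transformation `t_τ`. -/
def tfun (n : ℕ) (τ : Fin n → Bool) : BlowupX n → BlowupX n :=
  Sum.elim (fun i => Sum.inr (τ, i)) Sum.inr

lemma hfun_false_iff (n : ℕ) (σ : Fin n → Bool) (x : BlowupX n) :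
    hfun n σ x = false ↔ ∃ i, x = Sum.inr (σ, i) ∧ σ i = false := by
  cases x with
  | inl i => simp [hfun]
  | inr p =>
    rcases p with ⟨τ, i⟩
    constructor
    · intro h
      by_cases hτ : τ = σ
      · subst hτ
        simp [hfun] at h
        exact ⟨i, rfl, h⟩
      · simp [hfun, hτ] at h
    · rintro ⟨j, hj, hji⟩
      simp only [Sum.inr.injEq, Prod.mk.injEq] at hj
      obtain ⟨rfl, rfl⟩ := hj
      simp [hfun, hji]

/-- For every `k` there exist a set `X`, a class `H` with VC
dimension `1`, and transformations `T` such that `vc(H ∘ T) ≥ k`. -/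
theorem vc_composition_blowup (k : ℕ) :
    ∃ (X : Type) (H : Set (X → Bool)) (T : Set (X → X)),
      vcDim H = 1 ∧ (k : ℕ∞) ≤ vcDim {g : X → Bool | ∃ h ∈ H, ∃ t ∈ T, g = h ∘ t} := by
  classical
  set n := k + 1 with hn
  refine ⟨BlowupX n, Set.range (hfun n), Set.range (tfun n), ?_, ?_⟩
  · -- vcDim H = 1
    apply le_antisymm
    · -- ≤ 1
      apply iSup_le; intro S
      apply iSup_le; intro hS
      have hcard : S.card ≤ 1 := by
        by_contra hc
        push_neg at hc
        obtain ⟨a, ha, b, hb, hab⟩ := Finset.one_lt_card.mp hc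
        -- all-false labeling
        obtain ⟨f, ⟨σ, rfl⟩, hf⟩ := hS (fun _ => false)
        have hfa := hf a ha
        have hfb := hf b hb
        obtain ⟨i, rfl, hi⟩ := (hfun_false_iff n σ a).mp hfa
        obtain ⟨j, rfl, hj⟩ := (hfun_false_iff n σ b).mp hfb
        -- labeling: false on a, true on b
        obtain ⟨f', ⟨τ, rfl⟩, hf'⟩ :=
          hS (fun x => if x = Sum.inr (σ, j) then true else false)
        have h'a : hfun n τ (Sum.inr (σ, i)) = false := by
          rw [hf' _ ha, if_neg hab]
        have h'b : hfun n τ (Sum.inr (σ, j)) = true := by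
          rw [hf' _ hb, if_pos rfl]
        obtain ⟨i', hi', _⟩ := (hfun_false_iff n τ _).mp h'a
        have hτσ : τ = σ := by
          have := (Sum.inr.inj hi')
          exact (Prod.ext_iff.mp this).1.symm
        subst hτσ
        rw [show hfun n τ (Sum.inr (τ, j)) = τ j by simp [hfun]] at h'b
        rw [hj] at h'b
        exact Bool.false_ne_true h'b
      exact_mod_cast hcard
    · -- ≥ 1 : shatter the singleton {inr (const false, 0)}
      have h0 : (0 : Fin n) = ⟨0, Nat.succ_pos k⟩ := rfl
      set s : BlowupX n := Sum.inr (fun _ => false, (0 : Fin n)) with hs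
      have hshat : Shatters (Set.range (hfun n)) {s} := by
        intro g
        by_cases hg : g s = true
        · refine ⟨hfun n (fun _ => true), ⟨_, rfl⟩, ?_⟩
          intro x hx
          simp only [Finset.mem_singleton] at hx
          subst hx
          have hne : (fun _ : Fin n => false) ≠ (fun _ : Fin n => true) := by
            intro h
            have := congrFun h 0
            simp at this
          simp [hfun, hs, hne, hg]
          exact hg
        · refine ⟨hfun n (fun _ => false), ⟨_, rfl⟩, ?_⟩
          intro x hx
          simp only [Finset.mem_singleton] at hx
          subst hx
          simp only [Bool.not_eq_true] at hg
          simp [hfun, hs, hg]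
          exact hg
      calc (1 : ℕ∞) = (({s} : Finset (BlowupX n)).card : ℕ∞) := by simp
        _ ≤ _ := le_iSup₂ (f := fun (S : Finset (BlowupX n)) (_ : Shatters _ S) => (S.card : ℕ∞)) {s} hshat
  · -- k ≤ vcDim composed
    set F : Set (BlowupX n → Bool) :=
      {g | ∃ h ∈ Set.range (hfun n), ∃ t ∈ Set.range (tfun n), g = h ∘ t}
    set S : Finset (BlowupX n) := Finset.univ.image Sum.inl with hS
    have hshat : Shatters F S := by
      intro g
      set σ : Fin n → Bool := fun i => g (Sum.inl i) with hσ
      refine ⟨hfun n σ ∘ tfun n σ, ⟨hfun n σ, ⟨σ, rfl⟩, tfun n σ, ⟨σ, rfl⟩, rfl⟩, ?_⟩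
      intro x hx
      simp only [hS, Finset.mem_image, Finset.mem_univ, true_and] at hx
      obtain ⟨i, rfl⟩ := hx
      simp [hfun, tfun, hσ]
    have hcard : S.card = n := by
      rw [hS, Finset.card_image_of_injective _ Sum.inl_injective, Finset.card_univ, Fintype.card_fin]
    calc (k : ℕ∞) ≤ (n : ℕ∞) := by exact_mod_cast Nat.le_succ k
      _ = (S.card : ℕ∞) := by rw [hcard]
      _ ≤ _ := le_iSup₂ (f := fun (S : Finset (BlowupX n)) (_ : Shatters F S) => (S.card : ℕ∞)) S hshat
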